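/- Let n ≥ 2 be an integer and let 0 < a < b. Then there exists a unique ρ₀ ∈ (b, ∞) such that λ(a, ρ₀) = λ(b, ρ₀); moreover λ(a, ρ) > λ(b, ρ) for ρ ∈ (b, ρ₀) and λ(a, ρ) < λ(b, ρ) for ρ ∈ (ρ₀, ∞). (Equivalently: the generating catenaries C_a and C_b intersect at exactly two symmetric points.) -/

import Mathlib

open MeasureTheory

/-- `λ(c, ρ)`: the height of the upper generating catenary of the catenoid `C_c` in
`ℍⁿ × ℝ` at hyperbolic distance `ρ` from the axis. -/
noncomputable def lam (n : ℕ) (c ρ : ℝ) : ℝ :=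
  Real.sinh c ^ (n - 1) *
    ∫ u in c..ρ, 1 / Real.sqrt (Real.sinh u ^ (2 * n - 2) - Real.sinh c ^ (2 * n - 2))

open Real Set

noncomputable def itg (m : ℕ) (c u : ℝ) : ℝ :=
  1 / Real.sqrt (Real.sinh u ^ (2 * m) - Real.sinh c ^ (2 * m))

lemma sinh_sub_ge {c u : ℝ} (h : c ≤ u) : u - c ≤ Real.sinh u - Real.sinh c := by
  have hd : ∀ x : ℝ, HasDerivAt (fun x : ℝ => Real.sinh x - x) (Real.cosh x - 1) x := by
    intro x
    exact (Real.hasDerivAt_sinh x).sub (hasDerivAt_id' x)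
  have hmono : Monotone (fun x : ℝ => Real.sinh x - x) := by
    apply monotone_of_deriv_nonneg
    · exact fun x => (hd x).differentiableAt
    · intro x
      rw [(hd x).deriv]
      simp [Real.one_le_cosh]
  have := hmono h
  simp only at this
  linarith

lemma pow_den_pos {m : ℕ} (hm : 1 ≤ m) {c u : ℝ} (hc : 0 < c) (hcu : c < u) :
    0 < Real.sinh u ^ (2 * m) - Real.sinh c ^ (2 * m) := by
  have h1 : 0 < Real.sinh c := Real.sinh_pos_iff.2 hc
  have h2 : Real.sinh c < Real.sinh u := Real.sinh_lt_sinh.2 hcu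
  have := pow_lt_pow_left₀ h2 h1.le (by omega : 2 * m ≠ 0)
  linarith

lemma den_lower {m : ℕ} (hm : 1 ≤ m) {c u : ℝ} (hc : 0 < c) (hcu : c < u) :
    Real.sinh c ^ (2 * m - 1) * (u - c) ≤
      Real.sinh u ^ (2 * m) - Real.sinh c ^ (2 * m) := by
  have h1 : 0 < Real.sinh c := Real.sinh_pos_iff.2 hc
  have h2 : Real.sinh c < Real.sinh u := Real.sinh_lt_sinh.2 hcu
  have h3 : u - c ≤ Real.sinh u - Real.sinh c := sinh_sub_ge hcu.le
  have key : Real.sinh c ^ (2 * m - 1) * (Real.sinh u - Real.sinh c) ≤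
      Real.sinh u ^ (2 * m) - Real.sinh c ^ (2 * m) := by
    have e1 : Real.sinh u ^ (2 * m) = Real.sinh u * Real.sinh u ^ (2 * m - 1) := by
      rw [← pow_succ']; congr 1; omega
    have e2 : Real.sinh c ^ (2 * m) = Real.sinh c * Real.sinh c ^ (2 * m - 1) := by
      rw [← pow_succ']; congr 1; omega
    have h4 : Real.sinh c ^ (2 * m - 1) ≤ Real.sinh u ^ (2 * m - 1) :=
      pow_le_pow_left₀ h1.le h2.le _
    rw [e1, e2]
    nlinarith [pow_pos h1 (2 * m - 1)]
  nlinarith [pow_pos h1 (2 * m - 1)]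

lemma itg_measurable (m : ℕ) (c : ℝ) : Measurable (itg m c) := by
  unfold itg
  fun_prop

lemma itg_nonneg (m : ℕ) (c u : ℝ) : 0 ≤ itg m c u := by
  unfold itg
  positivity

lemma itg_pos {m : ℕ} (hm : 1 ≤ m) {c u : ℝ} (hc : 0 < c) (hcu : c < u) :
    0 < itg m c u := by
  unfold itg
  have := pow_den_pos hm hc hcu
  positivity

lemma itg_integrable {m : ℕ} (hm : 1 ≤ m) {c ρ : ℝ} (hc : 0 < c) (hρ : c ≤ ρ) :
    IntervalIntegrable (itg m c) volume c ρ := by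
  rcases eq_or_lt_of_le hρ with rfl | hρ
  · exact IntervalIntegrable.refl
  have h1 : 0 < Real.sinh c := Real.sinh_pos_iff.2 hc
  set K : ℝ := Real.sinh c ^ (2 * m - 1) with hK
  have hKpos : 0 < K := pow_pos h1 _
  set C : ℝ := 1 / Real.sqrt K with hC
  have hCpos : 0 < C := by positivity
  -- majorant
  have hmaj : IntervalIntegrable (fun u => C * (u - c) ^ (-(1/2) : ℝ)) volume c ρ := by
    have h0 : IntervalIntegrable (fun x : ℝ => x ^ (-(1/2) : ℝ)) volume 0 (ρ - c) :=
      intervalIntegral.intervalIntegrable_rpow' (by norm_num)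
    have h2 := (h0.comp_add_right (-c))
    simp only [zero_sub, sub_neg_eq_add, neg_neg, zero_add] at h2
    have h3 : IntervalIntegrable (fun x : ℝ => (x - c) ^ (-(1/2) : ℝ)) volume c ρ := by
      have : (fun x : ℝ => (x + -c) ^ (-(1/2) : ℝ)) = fun x : ℝ => (x - c) ^ (-(1/2) : ℝ) := by
        funext x; rw [← sub_eq_add_neg]
      rwa [this, sub_add_cancel] at h2
    exact h3.const_mul C
  apply hmaj.mono_fun ((itg_measurable m c).aestronglyMeasurable.restrict)
  rw [Filter.EventuallyLE, ae_restrict_iff' measurableSet_uIoc]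
  filter_upwards with u hu
  rw [uIoc_of_le hρ.le] at hu
  obtain ⟨h4, h5⟩ := hu
  have hden := pow_den_pos hm hc h4
  have hlow := den_lower hm hc h4
  have hucpos : 0 < u - c := by linarith
  have hval : itg m c u ≤ C * (u - c) ^ (-(1/2) : ℝ) := by
    unfold itg
    have e : C * (u - c) ^ (-(1/2) : ℝ) = 1 / Real.sqrt (K * (u - c)) := by
      rw [Real.rpow_neg hucpos.le, ← Real.sqrt_eq_rpow, Real.sqrt_mul hKpos.le, hC,
        one_div, one_div, mul_inv]
    rw [e]
    exact one_div_le_one_div_of_le (Real.sqrt_pos.2 (by positivity)) (Real.sqrt_le_sqrt hlow)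
  calc ‖itg m c u‖ = itg m c u := Real.norm_of_nonneg (itg_nonneg m c u)
    _ ≤ C * (u - c) ^ (-(1/2) : ℝ) := hval
    _ ≤ ‖C * (u - c) ^ (-(1/2) : ℝ)‖ := le_abs_self _

lemma itg_continuousAt {m : ℕ} (hm : 1 ≤ m) {c u : ℝ} (hc : 0 < c) (hcu : c < u) :
    ContinuousAt (itg m c) u := by
  have hden := pow_den_pos hm hc hcu
  unfold itg
  apply ContinuousAt.div continuousAt_const
  · exact (Real.continuous_sqrt.comp
      ((Real.continuous_sinh.pow _).sub continuous_const)).continuousAt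
  · exact (Real.sqrt_pos.2 hden).ne'

lemma lam_eq {n : ℕ} (hn : 2 ≤ n) (c ρ : ℝ) :
    lam n c ρ = Real.sinh c ^ (n - 1) * ∫ u in c..ρ, itg (n - 1) c u := by
  have h : 2 * n - 2 = 2 * (n - 1) := by omega
  simp only [lam, itg, h]

lemma primitive_hasDerivAt {m : ℕ} (hm : 1 ≤ m) {c ρ : ℝ} (hc : 0 < c) (hρ : c < ρ) :
    HasDerivAt (fun r => ∫ u in c..r, itg m c u) (itg m c ρ) ρ := by
  apply intervalIntegral.integral_hasDerivAt_right (itg_integrable hm hc hρ.le)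
  · exact ⟨univ, Filter.univ_mem,
      ((itg_measurable m c).aestronglyMeasurable).restrict⟩
  · exact itg_continuousAt hm hc hρ

lemma lam_hasDerivAt {n : ℕ} (hn : 2 ≤ n) {c ρ : ℝ} (hc : 0 < c) (hρ : c < ρ) :
    HasDerivAt (lam n c) (Real.sinh c ^ (n - 1) * itg (n - 1) c ρ) ρ := by
  have hfun : lam n c = fun r => Real.sinh c ^ (n - 1) * ∫ u in c..r, itg (n - 1) c u := by
    funext r; exact lam_eq hn c r
  rw [hfun]
  exact (primitive_hasDerivAt (by omega) hc hρ).const_mul _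

-- derivative comparison: for ρ > b > a > 0
lemma deriv_cmp {m : ℕ} (hm : 1 ≤ m) {a b ρ : ℝ} (ha : 0 < a) (hab : a < b) (hρ : b < ρ) :
    Real.sinh a ^ m * itg m a ρ < Real.sinh b ^ m * itg m b ρ := by
  have hb : 0 < b := ha.trans hab
  have hsa : 0 < Real.sinh a := Real.sinh_pos_iff.2 ha
  have hsb : Real.sinh a < Real.sinh b := Real.sinh_lt_sinh.2 hab
  have hpa : (0:ℝ) < Real.sinh a ^ m := pow_pos hsa m
  have hpab : Real.sinh a ^ m < Real.sinh b ^ m :=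
    pow_lt_pow_left₀ hsb hsa.le (by omega)
  have hda := pow_den_pos hm ha (hab.trans hρ)
  have hdb := pow_den_pos hm hb hρ
  have hdle : Real.sinh ρ ^ (2*m) - Real.sinh b ^ (2*m) <
      Real.sinh ρ ^ (2*m) - Real.sinh a ^ (2*m) := by
    have : Real.sinh a ^ (2*m) < Real.sinh b ^ (2*m) :=
      pow_lt_pow_left₀ hsb hsa.le (by omega)
    linarith
  unfold itg
  rw [mul_one_div, mul_one_div]
  exact div_lt_div₀ hpab (Real.sqrt_le_sqrt hdle.le) (pow_pos (hsa.trans hsb) m).le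
    (Real.sqrt_pos.2 hdb)

lemma lam_self {n : ℕ} (c : ℝ) : lam n c c = 0 := by
  simp [lam]

lemma lam_pos {n : ℕ} (hn : 2 ≤ n) {c ρ : ℝ} (hc : 0 < c) (hρ : c < ρ) :
    0 < lam n c ρ := by
  rw [lam_eq hn]
  have hm : 1 ≤ n - 1 := by omega
  apply mul_pos (pow_pos (Real.sinh_pos_iff.2 hc) _)
  apply intervalIntegral.intervalIntegral_pos_of_pos_on (itg_integrable hm hc hρ.le)
    (fun x hx => itg_pos hm hc hx.1) hρ

-- shifted integrand
noncomputable def F (m : ℕ) (c v : ℝ) : ℝ := Real.sinh c ^ m * itg m c (c + v)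

lemma F_integrable {m : ℕ} (hm : 1 ≤ m) {c L : ℝ} (hc : 0 < c) (hL : 0 ≤ L) :
    IntervalIntegrable (F m c) volume 0 L := by
  have h0 := (itg_integrable hm hc (by linarith : c ≤ c + L)).comp_add_right c
  simp only [sub_self, add_sub_cancel_left] at h0
  have h2 := h0.const_mul (Real.sinh c ^ m)
  have : (fun v => Real.sinh c ^ m * itg m c (v + c)) = F m c := by
    funext v; rw [F, add_comm]
  rwa [this] at h2

lemma lam_shift {n : ℕ} (hn : 2 ≤ n) {c L : ℝ} (hc : 0 < c) (hL : 0 ≤ L) :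
    lam n c (c + L) = ∫ v in (0:ℝ)..L, F (n-1) c v := by
  rw [lam_eq hn]
  have h1 : (∫ v in (0:ℝ)..L, itg (n-1) c (v + c)) = ∫ u in (0+c)..(L+c), itg (n-1) c u :=
    intervalIntegral.integral_comp_add_right _ c
  simp only [zero_add] at h1
  unfold F
  rw [intervalIntegral.integral_const_mul]
  congr 1
  rw [show c + L = L + c from add_comm c L, ← h1]
  congr 1
  funext v
  rw [add_comm]

lemma key_sinh {a b v : ℝ} (hab : a < b) (hv : 0 < v) :
    Real.sinh a * Real.sinh (b + v) < Real.sinh b * Real.sinh (a + v) := by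
  rw [Real.sinh_add, Real.sinh_add]
  have h1 : 0 < Real.sinh v := Real.sinh_pos_iff.2 hv
  have h2 : 0 < Real.sinh (b - a) := Real.sinh_pos_iff.2 (by linarith)
  rw [Real.sinh_sub] at h2
  nlinarith

lemma F_lt {m : ℕ} (hm : 1 ≤ m) {a b v : ℝ} (ha : 0 < a) (hab : a < b) (hv : 0 < v) :
    F m a v < F m b v := by
  have hb : 0 < b := ha.trans hab
  have hsa : 0 < Real.sinh a := Real.sinh_pos_iff.2 ha
  have hsb : 0 < Real.sinh b := Real.sinh_pos_iff.2 hb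
  have hsav : 0 < Real.sinh (a + v) := Real.sinh_pos_iff.2 (by linarith)
  have hsbv : 0 < Real.sinh (b + v) := Real.sinh_pos_iff.2 (by linarith)
  have key : Real.sinh a ^ m * Real.sinh (b + v) ^ m
      < Real.sinh b ^ m * Real.sinh (a + v) ^ m := by
    rw [← mul_pow, ← mul_pow]
    exact pow_lt_pow_left₀ (key_sinh hab hv) (by positivity) (by omega)
  have hX := pow_den_pos hm ha (by linarith : a < a + v)
  have hY := pow_den_pos hm hb (by linarith : b < b + v)
  unfold F itg
  rw [mul_one_div, mul_one_div,
    div_lt_div_iff₀ (Real.sqrt_pos.2 hX) (Real.sqrt_pos.2 hY)]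
  have e1 : Real.sinh a ^ m * Real.sqrt (Real.sinh (b+v) ^ (2*m) - Real.sinh b ^ (2*m))
      = Real.sqrt ((Real.sinh a ^ m)^2 * (Real.sinh (b+v) ^ (2*m) - Real.sinh b ^ (2*m))) := by
    rw [Real.sqrt_mul (sq_nonneg _), Real.sqrt_sq (by positivity)]
  have e2 : Real.sinh b ^ m * Real.sqrt (Real.sinh (a+v) ^ (2*m) - Real.sinh a ^ (2*m))
      = Real.sqrt ((Real.sinh b ^ m)^2 * (Real.sinh (a+v) ^ (2*m) - Real.sinh a ^ (2*m))) := by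
    rw [Real.sqrt_mul (sq_nonneg _), Real.sqrt_sq (by positivity)]
  rw [e1, e2]
  apply Real.sqrt_lt_sqrt (by positivity)
  have p1 : Real.sinh (b+v) ^ (2*m) = (Real.sinh (b+v) ^ m)^2 := by
    rw [← pow_mul, mul_comm]
  have p2 : Real.sinh (a+v) ^ (2*m) = (Real.sinh (a+v) ^ m)^2 := by
    rw [← pow_mul, mul_comm]
  have p3 : Real.sinh a ^ (2*m) = (Real.sinh a ^ m)^2 := by
    rw [← pow_mul, mul_comm]
  have p4 : Real.sinh b ^ (2*m) = (Real.sinh b ^ m)^2 := by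
    rw [← pow_mul, mul_comm]
  rw [p1, p2, p3, p4]
  have key2 := mul_self_lt_mul_self
    (by positivity : (0:ℝ) ≤ Real.sinh a ^ m * Real.sinh (b+v) ^ m) key
  nlinarith [key2, pow_pos hsa m, pow_pos hsb m, pow_pos hsav m, pow_pos hsbv m]

lemma exists_neg {n : ℕ} (hn : 2 ≤ n) {a b : ℝ} (ha : 0 < a) (hab : a < b) :
    ∃ ρ₂, b < ρ₂ ∧ lam n a ρ₂ < lam n b ρ₂ := by
  set m := n - 1 with hmdef
  have hm : 1 ≤ m := by omega
  have hb : 0 < b := ha.trans hab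
  have hsb : 0 < Real.sinh b := Real.sinh_pos_iff.2 hb
  set d : ℝ := b - a with hd
  have hdpos : 0 < d := by simp [hd]; linarith
  -- δ
  set δ : ℝ := ∫ v in (0:ℝ)..1, (F m b v - F m a v) with hδdef
  have hFa1 : IntervalIntegrable (F m a) volume 0 1 := F_integrable hm ha zero_le_one
  have hFb1 : IntervalIntegrable (F m b) volume 0 1 := F_integrable hm hb zero_le_one
  have hδpos : 0 < δ := by
    apply intervalIntegral.intervalIntegral_pos_of_pos_on (hFb1.sub hFa1)
      (fun v hv => sub_pos.2 (F_lt hm ha hab hv.1)) one_pos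
  -- comparison for L ≥ 1
  have hcmp : ∀ L : ℝ, 1 ≤ L → lam n a (a + L) + δ ≤ lam n b (b + L) := by
    intro L hL
    have hL0 : (0:ℝ) ≤ L := by linarith
    have hFaL : IntervalIntegrable (F m a) volume 0 L := F_integrable hm ha hL0
    have hFbL : IntervalIntegrable (F m b) volume 0 L := F_integrable hm hb hL0
    have hsub : Set.uIoc (1:ℝ) L ⊆ Set.uIoc (0:ℝ) L := by
      apply uIoc_subset_uIoc_of_uIcc_subset_uIcc
      rw [uIcc_of_le hL0, uIcc_of_le hL]
      exact Icc_subset_Icc (by norm_num) le_rfl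
    have hFa1L : IntervalIntegrable (F m a) volume 1 L := hFaL.mono_set' hsub
    have hFb1L : IntervalIntegrable (F m b) volume 1 L := hFbL.mono_set' hsub
    have htail : (0:ℝ) ≤ ∫ v in (1:ℝ)..L, (F m b v - F m a v) := by
      apply intervalIntegral.integral_nonneg hL
      intro v hv
      have : 0 < v := lt_of_lt_of_le one_pos hv.1
      exact sub_nonneg.2 (F_lt hm ha hab this).le
    have hsplit : (∫ v in (0:ℝ)..L, (F m b v - F m a v))
        = δ + ∫ v in (1:ℝ)..L, (F m b v - F m a v) := by
      rw [hδdef]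
      exact (intervalIntegral.integral_add_adjacent_intervals (hFb1.sub hFa1)
        (hFb1L.sub hFa1L)).symm
    have hdiff : lam n b (b + L) - lam n a (a + L)
        = ∫ v in (0:ℝ)..L, (F m b v - F m a v) := by
      rw [lam_shift hn hb hL0, lam_shift hn ha hL0,
        intervalIntegral.integral_sub hFbL hFaL]
    linarith [htail, hsplit ▸ hdiff]
  -- tail bound
  have htailbd : ∀ ρ : ℝ, b < ρ →
      lam n b (ρ + d) - lam n b ρ ≤ Real.sinh b ^ m * (d * itg m b ρ) := by
    intro ρ hρ
    have h1 : IntervalIntegrable (itg m b) volume b (ρ + d) :=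
      itg_integrable hm hb (by linarith)
    have h2 : IntervalIntegrable (itg m b) volume b ρ := itg_integrable hm hb (by linarith)
    have h3 : IntervalIntegrable (itg m b) volume ρ (ρ + d) := by
      apply h1.mono_set' (uIoc_subset_uIoc_of_uIcc_subset_uIcc _)
      rw [uIcc_of_le (by linarith : b ≤ ρ + d), uIcc_of_le (by linarith : ρ ≤ ρ + d)]
      exact Icc_subset_Icc (by linarith) le_rfl
    have hint : (∫ u in ρ..(ρ+d), itg m b u) ≤ d * itg m b ρ := by
      have := intervalIntegral.integral_mono_on (by linarith : ρ ≤ ρ + d) h3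
        (intervalIntegrable_const (c := itg m b ρ)) ?_
      · rw [intervalIntegral.integral_const] at this
        simpa [smul_eq_mul, add_sub_cancel_left] using this
      · intro u hu
        have hbu : b < u := lt_of_lt_of_le hρ hu.1
        unfold itg
        apply one_div_le_one_div_of_le (Real.sqrt_pos.2 (pow_den_pos hm hb hρ))
        apply Real.sqrt_le_sqrt
        have : Real.sinh ρ ^ (2*m) ≤ Real.sinh u ^ (2*m) :=
          pow_le_pow_left₀ (Real.sinh_pos_iff.2 (hb.trans hρ)).le
            (Real.sinh_le_sinh.2 hu.1) _
        linarith
    have heq : lam n b (ρ + d) - lam n b ρ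
        = Real.sinh b ^ m * ∫ u in ρ..(ρ+d), itg m b u := by
      rw [lam_eq hn, lam_eq hn, ← hmdef, ← mul_sub,
        intervalIntegral.integral_interval_sub_left h1 h2]
    rw [heq]
    have hpow : (0:ℝ) ≤ Real.sinh b ^ m := (pow_pos hsb m).le
    nlinarith [hint]
  -- choose ρ₂
  set E : ℝ := Real.sinh b ^ m * d / δ with hE
  have hEpos : 0 < E := by positivity
  set M : ℝ := E ^ 2 + (Real.sinh b ^ m) ^ 2 + 1 with hM
  set ρ₂ : ℝ := max (max (a + 1) (b + 1)) M with hρ₂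
  have hρ₂b : b < ρ₂ := lt_of_lt_of_le (by linarith)
    (le_trans (le_max_right (a+1) (b+1)) (le_max_left _ M))
  have hρ₂a1 : a + 1 ≤ ρ₂ := le_trans (le_max_left _ _) (le_max_left _ _)
  have hρ₂M : M ≤ ρ₂ := le_max_right _ _
  have hρ₂1 : 1 ≤ ρ₂ := by nlinarith [sq_nonneg E, sq_nonneg (Real.sinh b ^ m)]
  -- sinh ρ₂ ^ (2m) is big
  have hbig : E ^ 2 + (Real.sinh b ^ m) ^ 2 < Real.sinh ρ₂ ^ (2*m) := by
    have h1 : ρ₂ < Real.sinh ρ₂ := Real.self_lt_sinh_iff.2 (by linarith)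
    have h2 : Real.sinh ρ₂ ≤ Real.sinh ρ₂ ^ (2*m) :=
      le_self_pow₀ (by linarith) (by omega)
    nlinarith
  -- itg bound at ρ₂
  have hitg : Real.sinh b ^ m * (d * itg m b ρ₂) < δ := by
    have hden := pow_den_pos hm hb hρ₂b
    have hsq : E < Real.sqrt (Real.sinh ρ₂ ^ (2*m) - (Real.sinh b ^ m) ^ 2) := by
      apply Real.lt_sqrt_of_sq_lt
      linarith
    have hpe : Real.sinh b ^ (2*m) = (Real.sinh b ^ m) ^ 2 := by
      rw [← pow_mul, mul_comm]
    unfold itg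
    rw [hpe]
    have hw : 0 < Real.sqrt (Real.sinh ρ₂ ^ (2*m) - (Real.sinh b ^ m) ^ 2) :=
      lt_trans hEpos hsq
    have e3 : Real.sinh b ^ m * (d * (1 / Real.sqrt (Real.sinh ρ₂ ^ (2*m) - (Real.sinh b ^ m) ^ 2)))
        = (Real.sinh b ^ m * d) / Real.sqrt (Real.sinh ρ₂ ^ (2*m) - (Real.sinh b ^ m) ^ 2) := by
      ring
    rw [e3, div_lt_iff₀ hw]
    have e4 : Real.sinh b ^ m * d = E * δ := by
      rw [hE]; field_simp
    rw [e4]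
    calc E * δ < Real.sqrt (Real.sinh ρ₂ ^ (2*m) - (Real.sinh b ^ m) ^ 2) * δ :=
          mul_lt_mul_of_pos_right hsq hδpos
      _ = δ * Real.sqrt (Real.sinh ρ₂ ^ (2*m) - (Real.sinh b ^ m) ^ 2) := mul_comm _ _
  refine ⟨ρ₂, hρ₂b, ?_⟩
  have hL : 1 ≤ ρ₂ - a := by linarith
  have e1 : a + (ρ₂ - a) = ρ₂ := by ring
  have e2 : b + (ρ₂ - a) = ρ₂ + d := by rw [hd]; ring
  have h5 := hcmp (ρ₂ - a) hL
  rw [e1, e2] at h5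
  have h6 := htailbd ρ₂ hρ₂b
  linarith

lemma lam_contWithin_right {n : ℕ} (hn : 2 ≤ n) {c : ℝ} (hc : 0 < c) :
    ContinuousWithinAt (lam n c) (Ici c) c := by
  have hm : 1 ≤ n - 1 := by omega
  have hfun : lam n c = fun r => Real.sinh c ^ (n - 1) * ∫ u in c..r, itg (n - 1) c u := by
    funext r; exact lam_eq hn c r
  rw [hfun]
  have hpi := intervalIntegral.continuousOn_primitive_interval'
    (itg_integrable hm hc (by linarith : c ≤ c + 1)) left_mem_uIcc
  have hcw := hpi c left_mem_uIcc
  rw [uIcc_of_le (by linarith : c ≤ c + 1)] at hcw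
  have : ContinuousWithinAt (fun r => ∫ u in c..r, itg (n-1) c u) (Ici c) c := by
    unfold ContinuousWithinAt at hcw ⊢
    rwa [← nhdsWithin_Icc_eq_nhdsGE (by linarith : c < c + 1)]
  exact continuousWithinAt_const.mul this

/-- for `0 < a < b` there is a unique `ρ₀ ∈ (b, ∞)` with
`λ(a, ρ₀) = λ(b, ρ₀)`; moreover `λ(a, ρ) > λ(b, ρ)` on `(b, ρ₀)` and
`λ(a, ρ) < λ(b, ρ)` on `(ρ₀, ∞)` (the catenaries `C_a` and `C_b` meet at exactly two
symmetric points). -/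
theorem stmt_11 (n : ℕ) (hn : 2 ≤ n) (a b : ℝ) (ha : 0 < a) (hab : a < b) :
    ∃ ρ₀, b < ρ₀ ∧ lam n a ρ₀ = lam n b ρ₀ ∧
      (∀ ρ, b < ρ → lam n a ρ = lam n b ρ → ρ = ρ₀) ∧
      (∀ ρ ∈ Set.Ioo b ρ₀, lam n b ρ < lam n a ρ) ∧
      (∀ ρ ∈ Set.Ioi ρ₀, lam n a ρ < lam n b ρ) := by
  have hb : 0 < b := ha.trans hab
  have hm : 1 ≤ n - 1 := by omega
  set D : ℝ → ℝ := fun ρ => lam n a ρ - lam n b ρ with hD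
  have hcontD : ContinuousOn D (Ici b) := by
    intro ρ hρ
    rcases eq_or_lt_of_le (mem_Ici.1 hρ) with rfl | hlt
    · exact (((lam_hasDerivAt hn ha hab).continuousAt.continuousWithinAt).sub
        (lam_contWithin_right hn hb))
    · exact (((lam_hasDerivAt hn ha (hab.trans hlt)).continuousAt.continuousWithinAt).sub
        ((lam_hasDerivAt hn hb hlt).continuousAt.continuousWithinAt))
  have hanti : StrictAntiOn D (Ici b) := by
    apply strictAntiOn_of_deriv_neg (convex_Ici b) hcontD
    intro x hx
    rw [interior_Ici] at hx
    have hdx : HasDerivAt D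
        (Real.sinh a ^ (n-1) * itg (n-1) a x - Real.sinh b ^ (n-1) * itg (n-1) b x) x :=
      (lam_hasDerivAt hn ha (hab.trans hx)).sub (lam_hasDerivAt hn hb hx)
    rw [hdx.deriv]
    exact sub_neg.2 (deriv_cmp hm ha hab hx)
  have hDb : 0 < D b := by
    simp only [hD, lam_self]
    simpa using lam_pos hn ha hab
  obtain ⟨ρ₂, hρ₂b, hρ₂neg⟩ := exists_neg hn ha hab
  have hDρ₂ : D ρ₂ < 0 := sub_neg.2 hρ₂neg
  have hivt := intermediate_value_Ioo' hρ₂b.le (hcontD.mono Icc_subset_Ici_self)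
  have h0mem : (0:ℝ) ∈ Ioo (D ρ₂) (D b) := ⟨hDρ₂, hDb⟩
  obtain ⟨ρ₀, hρ₀mem, hDρ₀⟩ := hivt h0mem
  have hbρ₀ : b < ρ₀ := hρ₀mem.1
  have hρ₀Ici : ρ₀ ∈ Ici b := hbρ₀.le
  refine ⟨ρ₀, hbρ₀, sub_eq_zero.1 hDρ₀, ?_, ?_, ?_⟩
  · intro ρ hρ hlam
    have hDρ : D ρ = 0 := sub_eq_zero.2 hlam
    by_contra hne
    rcases lt_or_gt_of_ne hne with h | h
    · have := hanti hρ.le hρ₀Ici h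
      rw [hDρ, hDρ₀] at this; exact lt_irrefl 0 this
    · have := hanti hρ₀Ici hρ.le h
      rw [hDρ, hDρ₀] at this; exact lt_irrefl 0 this
  · intro ρ hρ
    have := hanti hρ.1.le hρ₀Ici hρ.2
    rw [hDρ₀] at this
    simpa [hD, sub_pos] using this
  · intro ρ hρ
    have := hanti hρ₀Ici (hbρ₀.trans hρ).le hρ
    rw [hDρ₀] at this
    simpa [hD, sub_neg] using this
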